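/- Let M be a torsion abelian group of cofinite type such that for all n ≥ 1 the cardinality |{x ∈ M : n•x=0}| equals n^m for a fixed natural number m. Then M ≅ (ℚ/ℤ)^m. -/

import Mathlib

/-- The `n`-torsion subgroup of an abelian group. -/
def nTorsion (n : ℕ) (A : Type*) [AddCommGroup A] : AddSubgroup A where
  carrier := {x | n • x = 0}
  zero_mem' := by simp
  add_mem' := by
    intro a b ha hb
    simp only [Set.mem_setOf_eq] at *
    rw [smul_add, ha, hb, add_zero]
  neg_mem' := by
    intro a ha
    simp only [Set.mem_setOf_eq] at *
    rw [smul_neg, ha, neg_zero]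

/-- The subgroup `n•A` of an abelian group `A`. -/
def smulTop (n : ℕ) (A : Type*) [AddCommGroup A] : AddSubgroup A where
  carrier := Set.range fun y : A => n • y
  zero_mem' := ⟨0, smul_zero n⟩
  add_mem' := by
    rintro _ _ ⟨a, rfl⟩ ⟨b, rfl⟩
    exact ⟨a + b, smul_add n a b⟩
  neg_mem' := by
    rintro _ ⟨a, rfl⟩
    exact ⟨-a, smul_neg n a⟩

/-- The `ℓ`-primary component of an abelian group: elements of `ℓ`-power order. -/
def primaryPart (ℓ : ℕ) (A : Type*) [AddCommGroup A] : AddSubgroup A where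
  carrier := {x | ∃ k : ℕ, ℓ ^ k • x = 0}
  zero_mem' := ⟨0, smul_zero _⟩
  add_mem' := by
    rintro a b ⟨j, hj⟩ ⟨k, hk⟩
    refine ⟨j + k, ?_⟩
    have ha : ℓ ^ (j + k) • a = 0 := by rw [add_comm, pow_add, mul_smul, hj, smul_zero]
    have hb : ℓ ^ (j + k) • b = 0 := by rw [pow_add, mul_smul, hk, smul_zero]
    rw [smul_add, ha, hb, add_zero]
  neg_mem' := by
    rintro a ⟨k, hk⟩
    exact ⟨k, by rw [smul_neg, hk, neg_zero]⟩

/-- The group `ℚ/ℤ`. -/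
abbrev QZ : Type := ℚ ⧸ AddSubgroup.zmultiples (1 : ℚ)

/-- The Prüfer `ℓ`-group `ℚ_ℓ/ℤ_ℓ`, realized as the `ℓ`-primary part of `ℚ/ℤ`. -/
abbrev Prufer (ℓ : ℕ) : Type := ↥(primaryPart ℓ QZ)

/-- The maximal divisible subgroup of an abelian group. -/
def divisiblePart (A : Type*) [AddCommGroup A] : AddSubgroup A :=
  sSup {H : AddSubgroup A | ∀ n : ℕ, 0 < n → ∀ x ∈ H, ∃ y ∈ H, n • y = x}

/-- The torsion subgroup of an abelian group. -/
def torsionSub (A : Type*) [AddCommGroup A] : AddSubgroup A where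
  carrier := {x | ∃ n : ℕ, 0 < n ∧ n • x = 0}
  zero_mem' := ⟨1, one_pos, smul_zero 1⟩
  add_mem' := by
    rintro a b ⟨j, hj, hja⟩ ⟨k, hk, hkb⟩
    refine ⟨j * k, Nat.mul_pos hj hk, ?_⟩
    have ha : (j * k) • a = 0 := by rw [mul_comm, mul_smul, hja, smul_zero]
    have hb : (j * k) • b = 0 := by rw [mul_smul, hkb, smul_zero]
    rw [smul_add, ha, hb, add_zero]
  neg_mem' := by
    rintro a ⟨k, hk, hka⟩
    exact ⟨k, hk, by rw [smul_neg, hka, neg_zero]⟩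

lemma mem_nTorsion_iff {A : Type*} [AddCommGroup A] {n : ℕ} {x : A} :
    x ∈ nTorsion n A ↔ n • x = 0 := Iff.rfl

lemma mem_of_coprime_smul {A : Type*} [AddCommGroup A] (H : AddSubgroup A) {x : A} {t : ℤ}
    {p : ℕ} (hp : p.Prime) (hnd : ¬ (p : ℤ) ∣ t) (h1 : t • x ∈ H) (h2 : (p : ℤ) • x ∈ H) :
    x ∈ H := by
  obtain ⟨u, v, huv⟩ := (Nat.prime_iff_prime_int.mp hp).coprime_iff_not_dvd.mpr hnd
  have hx : (u * (p : ℤ) + v * t) • x = x := by rw [huv, one_smul]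
  rw [add_smul, mul_smul, mul_smul] at hx
  rw [← hx]
  exact H.add_mem (H.zsmul_mem h2 u) (H.zsmul_mem h1 v)

theorem main_iso {M N : Type} [AddCommGroup M] [AddCommGroup N]
    (hMtors : ∀ x : M, ∃ n : ℕ, 0 < n ∧ n • x = 0)
    (hNtors : ∀ y : N, ∃ n : ℕ, 0 < n ∧ n • y = 0)
    (hNdiv : ∀ n : ℕ, 0 < n → ∀ y : N, ∃ z : N, n • z = y)
    (m : ℕ)
    (hMcard : ∀ n : ℕ, 0 < n → Nat.card (nTorsion n M) = n ^ m)
    (hNcard : ∀ n : ℕ, 0 < n → Nat.card (nTorsion n N) = n ^ m) :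
    Nonempty (M ≃+ N) := by
  classical
  have hMfin : ∀ n : ℕ, 0 < n → Finite (nTorsion n M) := fun n hn =>
    Nat.finite_of_card_ne_zero (by rw [hMcard n hn]; exact (pow_pos hn m).ne')
  have hNfin : ∀ n : ℕ, 0 < n → Finite (nTorsion n N) := fun n hn =>
    Nat.finite_of_card_ne_zero (by rw [hNcard n hn]; exact (pow_pos hn m).ne')
  set S : Set (AddSubgroup (M × N)) :=
    {G | (∀ y : N, ((0 : M), y) ∈ G → y = 0) ∧ (∀ x : M, (x, (0 : N)) ∈ G → x = 0)} with hS
  obtain ⟨G, hGmax⟩ : ∃ G, Maximal (· ∈ S) G := by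
    apply zorn_le₀ S
    intro c hcS hchain
    rcases c.eq_empty_or_nonempty with rfl | hne
    · refine ⟨⊥, ⟨?_, ?_⟩, by simp⟩
      · intro y h
        exact (Prod.ext_iff.mp (AddSubgroup.mem_bot.mp h)).2
      · intro x h
        exact (Prod.ext_iff.mp (AddSubgroup.mem_bot.mp h)).1
    · refine ⟨sSup c, ⟨?_, ?_⟩, fun z hz => le_sSup hz⟩
      · intro y hy
        obtain ⟨G', hG'c, hyG'⟩ :=
          (AddSubgroup.mem_sSup_of_directedOn hne hchain.directedOn).mp hy
        exact (hcS hG'c).1 y hyG'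
      · intro x hx
        obtain ⟨G', hG'c, hxG'⟩ :=
          (AddSubgroup.mem_sSup_of_directedOn hne hchain.directedOn).mp hx
        exact (hcS hG'c).2 x hxG'
  obtain ⟨hG1, hG2⟩ := hGmax.1
  set D : AddSubgroup M := G.map (AddMonoidHom.fst M N) with hD
  set R : AddSubgroup N := G.map (AddMonoidHom.snd M N) with hR
  have memD : ∀ x : M, x ∈ D ↔ ∃ y : N, (x, y) ∈ G := by
    intro x
    rw [hD, AddSubgroup.mem_map]
    constructor
    · rintro ⟨⟨a, b⟩, hab, rfl⟩
      exact ⟨b, hab⟩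
    · rintro ⟨y, hy⟩
      exact ⟨(x, y), hy, rfl⟩
  have memR : ∀ y : N, y ∈ R ↔ ∃ x : M, (x, y) ∈ G := by
    intro y
    rw [hR, AddSubgroup.mem_map]
    constructor
    · rintro ⟨⟨a, b⟩, hab, rfl⟩
      exact ⟨a, hab⟩
    · rintro ⟨x, hx⟩
      exact ⟨(x, y), hx, rfl⟩
  have hDtop : D = ⊤ := by
    by_contra hne
    obtain ⟨x₀, -, hx₀⟩ := SetLike.not_le_iff_exists.mp (fun h : (⊤ : AddSubgroup M) ≤ D =>
      hne (le_antisymm le_top h))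
    have hex : ∃ k : ℕ, 0 < k ∧ k • x₀ ∈ D := by
      obtain ⟨n, hn, hnx⟩ := hMtors x₀
      exact ⟨n, hn, by rw [hnx]; exact D.zero_mem⟩
    obtain ⟨hkpos, hkmem⟩ := Nat.find_spec hex
    set k := Nat.find hex with hk
    have hk1 : k ≠ 1 := by
      intro h
      rw [h, one_smul] at hkmem
      exact hx₀ hkmem
    set p := k.minFac with hpdef
    have hpp : p.Prime := Nat.minFac_prime hk1
    have hpdvd : p ∣ k := Nat.minFac_dvd k
    set x : M := (k / p) • x₀ with hxdef
    have hpx : p • x ∈ D := by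
      rw [hxdef, ← mul_smul, Nat.mul_div_cancel' hpdvd]
      exact hkmem
    have hxD : x ∉ D := by
      intro hmem
      have hlt : k / p < k := Nat.div_lt_self hkpos hpp.one_lt
      have hpos : 0 < k / p := Nat.div_pos (Nat.le_of_dvd hkpos hpdvd) hpp.pos
      exact Nat.find_min hex hlt ⟨hpos, hmem⟩
    -- generic extension step
    have extend : ∀ v : M × N, (p : ℤ) • v ∈ G → v.1 ∉ D →
        (∀ c : M, (c, v.2) ∈ G → False) → False := by
      intro v hpv hv1 hv2
      have hvG : v ∉ G := fun h => hv1 ((memD v.1).mpr ⟨v.2, h⟩)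
      have hdecomp : ∀ z : M × N, z ∈ G ⊔ AddSubgroup.zmultiples v →
          ∃ g ∈ G, ∃ t : ℤ, g + t • v = z := by
        intro z hz
        rw [AddSubgroup.mem_sup] at hz
        obtain ⟨g, hg, w, hw, hsum⟩ := hz
        obtain ⟨t, ht⟩ := AddSubgroup.mem_zmultiples_iff.mp hw
        exact ⟨g, hg, t, by rw [ht]; exact hsum⟩
      have hG'S : G ⊔ AddSubgroup.zmultiples v ∈ S := by
        constructor
        · intro y' hy'
          obtain ⟨g, hg, t, hz⟩ := hdecomp _ hy'
          by_cases hdvd : (p : ℤ) ∣ t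
          · obtain ⟨s, rfl⟩ := hdvd
            have htv : ((p : ℤ) * s) • v ∈ G := by
              rw [mul_comm, mul_smul]
              exact G.zsmul_mem hpv s
            exact hG1 y' (hz ▸ G.add_mem hg htv)
          · exfalso
            have h1 : g.1 + t • v.1 = 0 := by
              have := congrArg Prod.fst hz
              simpa using this
            apply hv1
            refine mem_of_coprime_smul D hpp hdvd ?_ ?_
            · have hgD : g.1 ∈ D := ⟨g, hg, rfl⟩
              rw [add_comm] at h1
              rw [eq_neg_of_add_eq_zero_left h1]
              exact D.neg_mem hgD
            · exact ⟨(p : ℤ) • v, hpv, rfl⟩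
        · intro x₁ hx₁
          obtain ⟨g, hg, t, hz⟩ := hdecomp _ hx₁
          by_cases hdvd : (p : ℤ) ∣ t
          · obtain ⟨s, rfl⟩ := hdvd
            have htv : ((p : ℤ) * s) • v ∈ G := by
              rw [mul_comm, mul_smul]
              exact G.zsmul_mem hpv s
            exact hG2 x₁ (hz ▸ G.add_mem hg htv)
          · exfalso
            have h2 : g.2 + t • v.2 = 0 := by
              have := congrArg Prod.snd hz
              simpa using this
            have hvR : v.2 ∈ R := by
              refine mem_of_coprime_smul R hpp hdvd ?_ ?_
              · have hgR : g.2 ∈ R := ⟨g, hg, rfl⟩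
                rw [add_comm] at h2
                rw [eq_neg_of_add_eq_zero_left h2]
                exact R.neg_mem hgR
              · exact ⟨(p : ℤ) • v, hpv, rfl⟩
            obtain ⟨c, hc⟩ := (memR v.2).mp hvR
            exact hv2 c hc
      have hle : G ⊔ AddSubgroup.zmultiples v ≤ G := hGmax.2 hG'S le_sup_left
      exact hvG (hle (AddSubgroup.mem_sup_right (AddSubgroup.mem_zmultiples v)))
    by_cases hsoc : nTorsion p M ≤ D
    · -- case B: use x with p • x ∈ D
      obtain ⟨b₀, hb₀⟩ := (memD _).mp hpx
      obtain ⟨y, hy⟩ := hNdiv p hpp.pos b₀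
      have hpxy : (p : ℤ) • ((x, y) : M × N) = ((p • x : M), b₀) := by
        rw [natCast_zsmul, Prod.smul_mk, hy]
      apply extend (x, y)
      · rw [hpxy]; exact hb₀
      · exact hxD
      · intro c hc
        have h1 : ((p • c : M), b₀) ∈ G := by
          have h := G.zsmul_mem hc (p : ℤ)
          rwa [natCast_zsmul, Prod.smul_mk, hy] at h
        have h2 : ((p • c - p • x : M), (0 : N)) ∈ G := by
          have := G.sub_mem h1 hb₀
          simpa using this
        have h3 : (p • c : M) = p • x := sub_eq_zero.mp (hG2 _ h2)
        have h4 : x - c ∈ nTorsion p M := by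
          rw [mem_nTorsion_iff, smul_sub, h3, sub_self]
        have h5 : c ∈ D := (memD c).mpr ⟨y, hc⟩
        apply hxD
        have := D.add_mem (hsoc h4) h5
        simpa using this
    · -- case A: fresh p-torsion element
      obtain ⟨x', hx'tor, hx'D⟩ := SetLike.not_le_iff_exists.mp hsoc
      have hyex : ∃ y ∈ nTorsion p N, y ∉ R := by
        by_contra h
        push_neg at h
        choose F hF using fun y : nTorsion p N => (memR y).mp (h y y.2)
        have hFtor : ∀ y : nTorsion p N, F y ∈ nTorsion p M := by
          intro y
          have hm : ((p • F y : M), (p • (y : N) : N)) ∈ G := by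
            have h := G.zsmul_mem (hF y) (p : ℤ)
            rwa [natCast_zsmul, Prod.smul_mk] at h
          rw [mem_nTorsion_iff.mp y.2] at hm
          exact mem_nTorsion_iff.mpr (hG2 _ hm)
        set F' : nTorsion p N → nTorsion p M := fun y => ⟨F y, hFtor y⟩ with hF'
        have hFinj : Function.Injective F' := by
          intro y y' hyy'
          have h0 : F y = F y' := congrArg Subtype.val hyy'
          have hsub : ((F y - F y' : M), ((y : N) - y' : N)) ∈ G := by
            have := G.sub_mem (hF y) (hF y')
            simpa using this
          rw [h0, sub_self] at hsub
          exact Subtype.ext (sub_eq_zero.mp (hG1 _ hsub))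
        haveI := hMfin p hpp.pos
        have hbij : Function.Bijective F' :=
          (Nat.bijective_iff_injective_and_card F').mpr
            ⟨hFinj, by rw [hNcard p hpp.pos, hMcard p hpp.pos]⟩
        obtain ⟨y, hyx'⟩ := hbij.2 ⟨x', hx'tor⟩
        apply hx'D
        have hFy : F y = x' := congrArg Subtype.val hyx'
        exact (memD x').mpr ⟨y, hFy ▸ hF y⟩
      obtain ⟨y, hytor, hyR⟩ := hyex
      apply extend (x', y)
      · have : (p : ℤ) • ((x', y) : M × N) = 0 := by
          rw [natCast_zsmul, Prod.smul_mk, mem_nTorsion_iff.mp hx'tor,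
            mem_nTorsion_iff.mp hytor]
          rfl
        rw [this]
        exact G.zero_mem
      · exact hx'D
      · intro c hc
        exact hyR ((memR y).mpr ⟨c, hc⟩)
  -- build the isomorphism
  have hexu : ∀ x : M, ∃ y : N, (x, y) ∈ G := fun x =>
    (memD x).mp (hDtop ▸ AddSubgroup.mem_top x)
  choose gf hgf using hexu
  have hadd : ∀ x x' : M, gf (x + x') = gf x + gf x' := by
    intro x x'
    have h1 : ((x + x' : M), (gf x + gf x' : N)) ∈ G := by
      have := G.add_mem (hgf x) (hgf x')
      simpa using this
    have h2 := G.sub_mem (hgf (x + x')) h1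
    have h3 : ((0 : M), (gf (x + x') - (gf x + gf x') : N)) ∈ G := by
      simpa using h2
    exact sub_eq_zero.mp (hG1 _ h3)
  set g : M →+ N := AddMonoidHom.mk' gf hadd with hg
  have ginj : Function.Injective g := by
    intro a b hab
    have hsub : ((a - b : M), (gf a - gf b : N)) ∈ G := by
      have := G.sub_mem (hgf a) (hgf b)
      simpa using this
    have h0 : gf a - gf b = 0 := sub_eq_zero.mpr hab
    rw [h0] at hsub
    exact sub_eq_zero.mp (hG2 _ hsub)
  have gsurj : Function.Surjective g := by
    intro y
    obtain ⟨n, hn, hny⟩ := hNtors y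
    haveI := hMfin n hn
    haveI := hNfin n hn
    set g' : nTorsion n M → nTorsion n N := fun x =>
      ⟨g x, by
        rw [mem_nTorsion_iff, ← map_nsmul, mem_nTorsion_iff.mp x.2, map_zero]⟩ with hg'
    have hg'inj : Function.Injective g' := by
      intro a b hab
      exact Subtype.ext (ginj (congrArg Subtype.val hab))
    have hbij : Function.Bijective g' :=
      (Nat.bijective_iff_injective_and_card g').mpr
        ⟨hg'inj, by rw [hMcard n hn, hNcard n hn]⟩
    obtain ⟨x, hx⟩ := hbij.2 ⟨y, mem_nTorsion_iff.mpr hny⟩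
    exact ⟨x, congrArg Subtype.val hx⟩
  exact ⟨AddEquiv.ofBijective g ⟨ginj, gsurj⟩⟩

namespace QZfacts

noncomputable def mkh : ℚ →+ QZ := QuotientAddGroup.mk' (AddSubgroup.zmultiples (1 : ℚ))

lemma mkh_apply (q : ℚ) : mkh q = QuotientAddGroup.mk q := rfl

lemma mkh_surj : Function.Surjective mkh := QuotientAddGroup.mk_surjective

lemma mkh_eq_zero {q : ℚ} : mkh q = 0 ↔ ∃ c : ℤ, (c : ℚ) = q := by
  rw [mkh_apply, QuotientAddGroup.eq_zero_iff]
  constructor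
  · rintro ⟨c, hc⟩
    exact ⟨c, by rw [← hc]; simp [zsmul_eq_mul]⟩
  · rintro ⟨c, hc⟩
    exact ⟨c, by rw [← hc]; simp [zsmul_eq_mul]⟩

lemma QZ_tors : ∀ x : QZ, ∃ n : ℕ, 0 < n ∧ n • x = 0 := by
  intro x
  obtain ⟨q, rfl⟩ := mkh_surj x
  refine ⟨q.den, q.den_pos, ?_⟩
  rw [← map_nsmul]
  rw [mkh_eq_zero]
  refine ⟨q.num, ?_⟩
  rw [nsmul_eq_mul]
  have hden : ((q.den : ℚ)) ≠ 0 := by exact_mod_cast q.den_pos.ne'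
  field_simp
  exact (Rat.den_mul_eq_num q).symm

lemma QZ_div : ∀ n : ℕ, 0 < n → ∀ x : QZ, ∃ y : QZ, n • y = x := by
  intro n hn x
  obtain ⟨q, rfl⟩ := mkh_surj x
  refine ⟨mkh (q / n), ?_⟩
  rw [← map_nsmul]
  congr 1
  rw [nsmul_eq_mul]
  rw [mul_div_cancel₀]
  exact_mod_cast hn.ne'

noncomputable def phi (n : ℕ) : ℤ →+ QZ :=
  mkh.comp (zmultiplesHom ℚ ((n : ℚ)⁻¹))

lemma phi_apply (n : ℕ) (k : ℤ) : phi n k = mkh ((k : ℚ) / n) := by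
  simp only [phi, AddMonoidHom.comp_apply, zmultiplesHom_apply, zsmul_eq_mul,
    div_eq_mul_inv]

lemma phi_n (n : ℕ) (hn : 0 < n) : phi n ((n : ℕ) : ℤ) = 0 := by
  rw [phi_apply, mkh_eq_zero]
  refine ⟨1, ?_⟩
  rw [Int.cast_natCast, div_self]
  · norm_num
  · exact_mod_cast hn.ne'

lemma card_nTorsion_QZ (n : ℕ) (hn : 0 < n) : Nat.card (nTorsion n QZ) = n := by
  haveI : NeZero n := ⟨hn.ne'⟩
  set F : ZMod n →+ QZ := ZMod.lift n ⟨phi n, phi_n n hn⟩ with hF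
  have hFcoe : ∀ k : ℤ, F (k : ZMod n) = phi n k := fun k => ZMod.lift_coe n _ k
  have hFtor : ∀ z : ZMod n, F z ∈ nTorsion n QZ := by
    intro z
    rw [mem_nTorsion_iff, ← map_nsmul]
    have hz : n • z = 0 := by
      rw [nsmul_eq_mul, ZMod.natCast_self, zero_mul]
    rw [hz, map_zero]
  set F' : ZMod n → nTorsion n QZ := fun z => ⟨F z, hFtor z⟩ with hF'
  have hFinj : Function.Injective F' := by
    intro z z' hzz'
    obtain ⟨a, rfl⟩ := ZMod.intCast_surjective (n := n) z
    obtain ⟨b, rfl⟩ := ZMod.intCast_surjective (n := n) z'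
    have hzero : F ((a - b : ℤ) : ZMod n) = 0 := by
      push_cast
      rw [map_sub]
      have : F (a : ZMod n) = F (b : ZMod n) := congrArg Subtype.val hzz'
      rw [this, sub_self]
    rw [hFcoe, phi_apply, mkh_eq_zero] at hzero
    obtain ⟨c, hc⟩ := hzero
    have hcn : (c : ℚ) * n = ((a : ℚ) - b) := by
      rw [hc]
      push_cast
      rw [div_mul_cancel₀]
      exact_mod_cast hn.ne'
    have hdvd : (n : ℤ) ∣ (a - b) := ⟨c, by exact_mod_cast (by rw [← hcn]; ring : ((a : ℚ) - b) = n * c)⟩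
    have : ((a - b : ℤ) : ZMod n) = 0 := (ZMod.intCast_zmod_eq_zero_iff_dvd _ _).mpr hdvd
    push_cast at this
    rw [sub_eq_zero] at this
    exact this
  have hFsurj : Function.Surjective F' := by
    rintro ⟨w, hw⟩
    obtain ⟨q, rfl⟩ := mkh_surj w
    rw [mem_nTorsion_iff, ← map_nsmul, mkh_eq_zero] at hw
    obtain ⟨c, hc⟩ := hw
    refine ⟨(c : ZMod n), Subtype.ext ?_⟩
    show F (c : ZMod n) = mkh q
    rw [hFcoe, phi_apply]
    congr 1
    rw [nsmul_eq_mul] at hc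
    field_simp
    rw [hc]
  have := Nat.card_congr (Equiv.ofBijective F' ⟨hFinj, hFsurj⟩)
  rw [← this, Nat.card_zmod]

end QZfacts

lemma pi_tors (m : ℕ) : ∀ x : Fin m → QZ, ∃ n : ℕ, 0 < n ∧ n • x = 0 := by
  intro x
  choose nf hpos hzero using fun i => QZfacts.QZ_tors (x i)
  refine ⟨∏ i, nf i, Finset.prod_pos (fun i _ => hpos i), ?_⟩
  funext i
  obtain ⟨c, hc⟩ := Finset.dvd_prod_of_mem nf (Finset.mem_univ i)
  show (∏ j, nf j) • x i = 0
  rw [hc, mul_comm, mul_smul, hzero i, smul_zero]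

lemma pi_div (m : ℕ) : ∀ n : ℕ, 0 < n → ∀ x : Fin m → QZ, ∃ y : Fin m → QZ, n • y = x := by
  intro n hn x
  choose yf hyf using fun i => QZfacts.QZ_div n hn (x i)
  exact ⟨yf, funext fun i => hyf i⟩

def torEquiv (m n : ℕ) : nTorsion n (Fin m → QZ) ≃ (Fin m → nTorsion n QZ) where
  toFun x i := ⟨x.1 i, congrFun (mem_nTorsion_iff.mp x.2) i⟩
  invFun f := ⟨fun i => (f i).1, by
    rw [mem_nTorsion_iff]
    funext i
    exact mem_nTorsion_iff.mp (f i).2⟩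
  left_inv x := rfl
  right_inv f := rfl

lemma pi_card (m n : ℕ) (hn : 0 < n) :
    Nat.card (nTorsion n (Fin m → QZ)) = n ^ m := by
  rw [Nat.card_congr (torEquiv m n), Nat.card_pi]
  simp only [QZfacts.card_nTorsion_QZ n hn]
  rw [Finset.prod_const, Finset.card_univ, Fintype.card_fin]


/-- a torsion abelian group of cofinite type with `|{x : n•x=0}| = n^m` for all
`n ≥ 1` is isomorphic to `(ℚ/ℤ)^m`. -/
theorem stmt_12 {M : Type} [AddCommGroup M]
    (htors : ∀ x : M, ∃ n : ℕ, 0 < n ∧ n • x = 0)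
    (hfin : ∀ n : ℕ, 0 < n → Finite (nTorsion n M))
    (m : ℕ) (hcard : ∀ n : ℕ, 0 < n → Nat.card (nTorsion n M) = n ^ m) :
    Nonempty (M ≃+ (Fin m → QZ)) :=
  main_iso htors (pi_tors m) (pi_div m) m hcard (fun n hn => pi_card m n hn)
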